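/- Assume R₃ > 1 and let X₃ = (0, 0, 1 − 1/R₃, 0, 0, (R₃−1)δ₃/α₃). Then the six eigenvalues of J(X₃) are the real numbers (−α₃r₃(c+δ₁) ± √((α₃r₃(c−δ₁))² + 4α₃r₃α₁p₁cδ₃))/(2α₃r₃), (−α₃r₃(c+δ₂) ± √((α₃r₃(c−δ₂))² + 4α₃r₃α₂q₂cδ₃))/(2α₃r₃), and (−α₃r₃ − c² ± √(4c³δ₃ + (α₃r₃ − c²)²))/(2c). -/

import Mathlib

open Polynomial Matrix

@[simp] lemma cons_val_five' {α : Type*} (x : α) (u : Fin 5 → α) :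
    Matrix.vecCons x u 5
      = Matrix.vecHead (Matrix.vecTail (Matrix.vecTail (Matrix.vecTail (Matrix.vecTail u)))) := rfl
@[simp] lemma csA : Fin.castSucc (2:Fin 3) = (2:Fin 4) := rfl
@[simp] lemma csB : Fin.castSucc (2:Fin 4) = (2:Fin 5) := rfl
@[simp] lemma csC : Fin.castSucc (2:Fin 5) = (2:Fin 6) := rfl
@[simp] lemma csD : Fin.castSucc (3:Fin 4) = (3:Fin 5) := rfl
@[simp] lemma csE : Fin.castSucc (3:Fin 5) = (3:Fin 6) := rfl
@[simp] lemma csF : Fin.castSucc (4:Fin 5) = (4:Fin 6) := rfl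
@[simp] lemma csG : Fin.castSucc (1:Fin 2) = (1:Fin 3) := rfl
@[simp] lemma csH : Fin.castSucc (1:Fin 3) = (1:Fin 4) := rfl
@[simp] lemma csI : Fin.castSucc (1:Fin 4) = (1:Fin 5) := rfl
@[simp] lemma csJ : Fin.castSucc (1:Fin 5) = (1:Fin 6) := rfl

set_option maxHeartbeats 4000000 in
set_option maxRecDepth 20000 in
lemma det6 (a1 a2 a3 b1 b2 b3 t1 t2 p1 p2 q2 q3 r3 c : ℝ) :
    (!![a1,0,0,b1,0,0; 0,a2,0,0,b2,0; t1,t2,a3,0,0,b3;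
        p1,0,0,-c,0,0; p2,q2,0,0,-c,0; 0,q3,r3,0,0,-c] : Matrix (Fin 6) (Fin 6) ℝ).charpoly
    = ((X - C a1)*(X + C c) - C b1*C p1) * ((X - C a2)*(X + C c) - C b2*C q2)
      * ((X - C a3)*(X + C c) - C b3*C r3) := by
  have h : (!![a1,0,0,b1,0,0; 0,a2,0,0,b2,0; t1,t2,a3,0,0,b3;
        p1,0,0,-c,0,0; p2,q2,0,0,-c,0; 0,q3,r3,0,0,-c] : Matrix (Fin 6) (Fin 6) ℝ).charmatrix
      = !![X - C a1,0,0,-C b1,0,0; 0,X - C a2,0,0,-C b2,0; -C t1,-C t2,X - C a3,0,0,-C b3;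
           -C p1,0,0,X + C c,0,0; -C p2,-C q2,0,0,X + C c,0; 0,-C q3,-C r3,0,0,X + C c] := by
    ext i j : 2
    fin_cases i <;> fin_cases j <;>
      simp [charmatrix_apply_eq, charmatrix_apply_ne, Matrix.vecHead, Matrix.vecTail]
  rw [Matrix.charpoly, h]
  simp [Matrix.det_succ_row_zero, Fin.sum_univ_succ, Matrix.det_fin_three,
    Matrix.submatrix_apply, Matrix.vecHead, Matrix.vecTail, Fin.succAbove]
  ring

lemma quadfac (a c b p r s : ℝ) (h1 : r + s = a - c) (h2 : r * s = -(a*c) - b*p) :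
    (X - C a) * (X + C c) - C b * C p = (X - C r) * (X - C s) := by
  have h1' : C r + C s = C a - C c := by rw [← C_add, h1, C_sub]
  have h2' : C r * C s = -(C a * C c) - C b * C p := by
    rw [← C_mul, h2, C_sub, C_neg, C_mul, C_mul]
  linear_combination (X : ℝ[X]) * h1' - h2'

lemma prodfac (A B D v : ℝ) (hA : A ≠ 0) (hD : 0 ≤ D) (hv : v = (B^2 - D)/(4*A^2)) :
    ((-B + Real.sqrt D)/(2*A)) * ((-B - Real.sqrt D)/(2*A)) = v := by
  have hS : Real.sqrt D ^ 2 = D := Real.sq_sqrt hD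
  have hS' : Real.sqrt D * Real.sqrt D = D := Real.mul_self_sqrt hD
  rw [hv]; field_simp; linear_combination (-4) * hS

lemma sumfac (A B D w : ℝ) (hA : A ≠ 0) (hw : w = -B/A) :
    ((-B + Real.sqrt D)/(2*A)) + ((-B - Real.sqrt D)/(2*A)) = w := by
  rw [hw]; field_simp; ring

/-- Jacobian matrix of the HBV three-strain vector field at `x = (y₁,y₂,y₃,v₁,v₂,v₃)`. -/
noncomputable def Jhbv (α₁ α₂ α₃ δ₁ δ₂ δ₃ c p₁ p₂ q₂ q₃ r₃ : ℝ) (x : Fin 6 → ℝ) :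
    Matrix (Fin 6) (Fin 6) ℝ :=
  !![-(α₁ * x 3 + δ₁), -(α₁ * x 3), -(α₁ * x 3), α₁ * (1 - x 0 - x 1 - x 2), 0, 0;
     -(α₂ * x 4), -(α₂ * x 4 + δ₂), -(α₂ * x 4), 0, α₂ * (1 - x 0 - x 1 - x 2), 0;
     -(α₃ * x 5), -(α₃ * x 5), -(α₃ * x 5 + δ₃), 0, 0, α₃ * (1 - x 0 - x 1 - x 2);
     p₁, 0, 0, -c, 0, 0;
     p₂, q₂, 0, 0, -c, 0;
     0, q₃, r₃, 0, 0, -c]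

set_option maxHeartbeats 4000000 in
set_option maxRecDepth 20000 in
/-- if R₃ > 1 and X₃ = (0, 0, 1 − 1/R₃, 0, 0, (R₃−1)δ₃/α₃), the six
eigenvalues of J(X₃) are the six listed real numbers. -/
theorem stmt_4 (α₁ α₂ α₃ δ₁ δ₂ δ₃ c p₁ p₂ q₂ q₃ r₃ : ℝ)
    (hα₁ : 0 < α₁) (hα₂ : 0 < α₂) (hα₃ : 0 < α₃)
    (hδ₁ : 0 < δ₁) (hδ₂ : 0 < δ₂) (hδ₃ : 0 < δ₃) (hc : 0 < c)
    (hp₁ : 0 < p₁) (hp₂ : 0 < p₂) (hq₂ : 0 < q₂) (hq₃ : 0 < q₃) (hr₃ : 0 < r₃)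
    (hR₃ : 1 < α₃ * r₃ / (c * δ₃)) :
    let R₃ : ℝ := α₃ * r₃ / (c * δ₃)
    (Jhbv α₁ α₂ α₃ δ₁ δ₂ δ₃ c p₁ p₂ q₂ q₃ r₃
          ![0, 0, 1 - 1 / R₃, 0, 0, (R₃ - 1) * δ₃ / α₃]).charpoly.roots =
      {(-(α₃ * r₃ * (c + δ₁)) +
          Real.sqrt ((α₃ * r₃ * (c - δ₁)) ^ 2 + 4 * α₃ * r₃ * α₁ * p₁ * c * δ₃)) /
            (2 * α₃ * r₃),
       (-(α₃ * r₃ * (c + δ₁)) -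
          Real.sqrt ((α₃ * r₃ * (c - δ₁)) ^ 2 + 4 * α₃ * r₃ * α₁ * p₁ * c * δ₃)) /
            (2 * α₃ * r₃),
       (-(α₃ * r₃ * (c + δ₂)) +
          Real.sqrt ((α₃ * r₃ * (c - δ₂)) ^ 2 + 4 * α₃ * r₃ * α₂ * q₂ * c * δ₃)) /
            (2 * α₃ * r₃),
       (-(α₃ * r₃ * (c + δ₂)) -
          Real.sqrt ((α₃ * r₃ * (c - δ₂)) ^ 2 + 4 * α₃ * r₃ * α₂ * q₂ * c * δ₃)) /
            (2 * α₃ * r₃),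
       (-(α₃ * r₃) - c ^ 2 + Real.sqrt (4 * c ^ 3 * δ₃ + (α₃ * r₃ - c ^ 2) ^ 2)) / (2 * c),
       (-(α₃ * r₃) - c ^ 2 - Real.sqrt (4 * c ^ 3 * δ₃ + (α₃ * r₃ - c ^ 2) ^ 2)) / (2 * c)} := by
  intro R₃
  have hα₁0 : α₁ ≠ 0 := ne_of_gt hα₁
  have hα₂0 : α₂ ≠ 0 := ne_of_gt hα₂
  have hα₃0 : α₃ ≠ 0 := ne_of_gt hα₃
  have hc0 : c ≠ 0 := ne_of_gt hc
  have hδ₃0 : δ₃ ≠ 0 := ne_of_gt hδ₃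
  have hr₃0 : r₃ ≠ 0 := ne_of_gt hr₃
  have hA0 : α₃ * r₃ ≠ 0 := mul_ne_zero hα₃0 hr₃0
  have hRdef : R₃ = α₃ * r₃ / (c * δ₃) := rfl
  have hM : Jhbv α₁ α₂ α₃ δ₁ δ₂ δ₃ c p₁ p₂ q₂ q₃ r₃
          ![0, 0, 1 - 1 / R₃, 0, 0, (R₃ - 1) * δ₃ / α₃]
      = !![-δ₁, 0, 0, α₁*(c*δ₃/(α₃*r₃)), 0, 0;
           0, -δ₂, 0, 0, α₂*(c*δ₃/(α₃*r₃)), 0;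
           -((R₃-1)*δ₃), -((R₃-1)*δ₃), -(α₃*r₃/c), 0, 0, c*δ₃/r₃;
           p₁, 0, 0, -c, 0, 0;
           p₂, q₂, 0, 0, -c, 0;
           0, q₃, r₃, 0, 0, -c] := by
    rw [hRdef]
    ext i j : 2
    fin_cases i <;> fin_cases j <;>
      simp [Jhbv, Matrix.vecHead, Matrix.vecTail] <;> field_simp <;> ring
  have hcp := hM ▸ det6 (-δ₁) (-δ₂) (-(α₃*r₃/c)) (α₁*(c*δ₃/(α₃*r₃))) (α₂*(c*δ₃/(α₃*r₃)))
      (c*δ₃/r₃) (-((R₃-1)*δ₃)) (-((R₃-1)*δ₃)) p₁ p₂ q₂ q₃ r₃ c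
  -- block 1
  set D₁ : ℝ := (α₃ * r₃ * (c - δ₁)) ^ 2 + 4 * α₃ * r₃ * α₁ * p₁ * c * δ₃ with hD₁
  set D₂ : ℝ := (α₃ * r₃ * (c - δ₂)) ^ 2 + 4 * α₃ * r₃ * α₂ * q₂ * c * δ₃ with hD₂
  set D₃ : ℝ := 4 * c ^ 3 * δ₃ + (α₃ * r₃ - c ^ 2) ^ 2 with hD₃
  have hD₁0 : (0:ℝ) ≤ D₁ := by rw [hD₁]; positivity
  have hD₂0 : (0:ℝ) ≤ D₂ := by rw [hD₂]; positivity
  have hD₃0 : (0:ℝ) ≤ D₃ := by rw [hD₃]; positivity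
  have f1 : (X - C (-δ₁))*(X + C c) - C (α₁*(c*δ₃/(α₃*r₃))) * C p₁
      = (X - C ((-(α₃ * r₃ * (c + δ₁)) + Real.sqrt D₁) / (2 * α₃ * r₃)))
        * (X - C ((-(α₃ * r₃ * (c + δ₁)) - Real.sqrt D₁) / (2 * α₃ * r₃))) := by
    apply quadfac
    · have := sumfac (α₃*r₃) (α₃ * r₃ * (c + δ₁)) D₁ (-δ₁ - c) hA0
        (by field_simp; ring)
      linear_combination this
    · have := prodfac (α₃*r₃) (α₃ * r₃ * (c + δ₁)) D₁
        (-((-δ₁)*c) - (α₁*(c*δ₃/(α₃*r₃)))*p₁) hA0 hD₁0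
        (by rw [hD₁]; field_simp; ring)
      linear_combination this
  have f2 : (X - C (-δ₂))*(X + C c) - C (α₂*(c*δ₃/(α₃*r₃))) * C q₂
      = (X - C ((-(α₃ * r₃ * (c + δ₂)) + Real.sqrt D₂) / (2 * α₃ * r₃)))
        * (X - C ((-(α₃ * r₃ * (c + δ₂)) - Real.sqrt D₂) / (2 * α₃ * r₃))) := by
    apply quadfac
    · have := sumfac (α₃*r₃) (α₃ * r₃ * (c + δ₂)) D₂ (-δ₂ - c) hA0
        (by field_simp; ring)
      linear_combination this
    · have := prodfac (α₃*r₃) (α₃ * r₃ * (c + δ₂)) D₂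
        (-((-δ₂)*c) - (α₂*(c*δ₃/(α₃*r₃)))*q₂) hA0 hD₂0
        (by rw [hD₂]; field_simp; ring)
      linear_combination this
  have f3 : (X - C (-(α₃*r₃/c)))*(X + C c) - C (c*δ₃/r₃) * C r₃
      = (X - C ((-(α₃ * r₃) - c ^ 2 + Real.sqrt D₃) / (2 * c)))
        * (X - C ((-(α₃ * r₃) - c ^ 2 - Real.sqrt D₃) / (2 * c))) := by
    apply quadfac
    · have := sumfac c (α₃ * r₃ + c^2) D₃ (-(α₃*r₃/c) - c) hc0
        (by field_simp; ring)
      linear_combination this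
    · have := prodfac c (α₃ * r₃ + c^2) D₃
        (-((-(α₃*r₃/c))*c) - (c*δ₃/r₃)*r₃) hc0 hD₃0
        (by rw [hD₃]; field_simp; ring)
      linear_combination this
  have key : (Jhbv α₁ α₂ α₃ δ₁ δ₂ δ₃ c p₁ p₂ q₂ q₃ r₃
          ![0, 0, 1 - 1 / R₃, 0, 0, (R₃ - 1) * δ₃ / α₃]).charpoly
      = (Multiset.map (fun a => X - C a)
          ({(-(α₃ * r₃ * (c + δ₁)) + Real.sqrt D₁) / (2 * α₃ * r₃),
            (-(α₃ * r₃ * (c + δ₁)) - Real.sqrt D₁) / (2 * α₃ * r₃),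
            (-(α₃ * r₃ * (c + δ₂)) + Real.sqrt D₂) / (2 * α₃ * r₃),
            (-(α₃ * r₃ * (c + δ₂)) - Real.sqrt D₂) / (2 * α₃ * r₃),
            (-(α₃ * r₃) - c ^ 2 + Real.sqrt D₃) / (2 * c),
            (-(α₃ * r₃) - c ^ 2 - Real.sqrt D₃) / (2 * c)} : Multiset ℝ)).prod := by
    rw [hcp, f1, f2, f3]
    simp only [Multiset.insert_eq_cons, Multiset.map_cons, Multiset.prod_cons,
      Multiset.map_singleton, Multiset.prod_singleton]
    ring
  rw [key, Polynomial.roots_multiset_prod_X_sub_C]
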